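/- Let n be an odd positive integer and s a real number with s > 0. Then Σ_{k=0}^∞ C(2^k, −n) · 2^{−ks} equals: 1 + 2^{−s} if n ≡ 1 (mod 8); 1 + 2^{−s} + 2 · 2^{−2s} if n ≡ 3 (mod 8); 1 + 2^{−s} if n ≡ 5 (mod 8); and (1 + 2^{−2s} + 2 · 2^{−3s}) / (1 − 2^{−s}) if n ≡ 7 (mod 8). -/

import Mathlib

/-- `C m n` is the number of residues `x` modulo `m` with `x² ≡ n (mod m)`. -/
noncomputable def C (m : ℕ) (n : ℤ) : ℕ := Nat.card {x : ZMod m // x ^ 2 = (n : ZMod m)}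



lemma cast_mod_eq (a : ℤ) (m : ℕ) : (a : ZMod m) = ((a % (m:ℕ) : ℤ) : ZMod m) :=
  (ZMod.intCast_mod a m).symm

lemma C_one (a : ℤ) : C 1 a = 1 := by
  have : Unique {x : ZMod 1 // x ^ 2 = (a : ZMod 1)} :=
    { default := ⟨0, Subsingleton.elim _ _⟩, uniq := fun x => Subtype.ext (Subsingleton.elim _ _) }
  simp [C, Nat.card_unique]

lemma C_two (a : ℤ) (ha : a % 2 = 1) : C 2 a = 1 := by
  have h : (a : ZMod 2) = 1 := by rw [cast_mod_eq a 2]; norm_num [ha]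
  rw [C, h, Nat.card_eq_fintype_card]
  decide

lemma C_four_three (a : ℤ) (ha : a % 4 = 3) : C 4 a = 0 := by
  have h : (a : ZMod 4) = 3 := by rw [cast_mod_eq a 4]; norm_num [ha]
  rw [C, h, Nat.card_eq_fintype_card]
  decide

lemma C_four_one (a : ℤ) (ha : a % 4 = 1) : C 4 a = 2 := by
  have h : (a : ZMod 4) = 1 := by rw [cast_mod_eq a 4]; norm_num [ha]
  rw [C, h, Nat.card_eq_fintype_card]
  decide


lemma sq_eq_isEmpty (m : ℕ) (a : ℤ) (ha : a % 8 ≠ 1) (hodd : a % 2 = 1) :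
    IsEmpty {x : ZMod (2^(m+3)) // x ^ 2 = (a : ZMod (2^(m+3)))} := by
  constructor
  rintro ⟨x, hx⟩
  have hdvd : (8:ℕ) ∣ 2^(m+3) := by
    have : (8:ℕ) = 2^3 := by norm_num
    rw [this]; exact pow_dvd_pow 2 (by omega)
  let φ := ZMod.castHom hdvd (ZMod 8)
  have h8' : (φ x)^2 = ((a % 8 : ℤ) : ZMod 8) := by
    rw [← map_pow, hx, map_intCast]; exact (ZMod.intCast_mod a 8).symm
  have ha' : a % 8 = 3 ∨ a % 8 = 5 ∨ a % 8 = 7 := by omega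
  have key3 : ∀ y : ZMod 8, y^2 ≠ 3 := by decide
  have key5 : ∀ y : ZMod 8, y^2 ≠ 5 := by decide
  have key7 : ∀ y : ZMod 8, y^2 ≠ 7 := by decide
  rcases ha' with h | h | h <;> rw [h] at h8' <;> norm_num at h8'
  exacts [key3 _ h8', key5 _ h8', key7 _ h8']


lemma sqrt_exists (a : ℤ) (ha : a % 8 = 1) (m : ℕ) :
    ∃ y : ℤ, (2:ℤ)^(m+3) ∣ y^2 - a := by
  induction m with
  | zero =>
    refine ⟨1, ?_⟩
    have h8 : (2:ℤ)^(0+3) = 8 := by norm_num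
    rw [h8]
    omega
  | succ m ih =>
    obtain ⟨y, t, ht⟩ := ih
    have hy : y % 2 = 1 := by
      have h2 : (2:ℤ) ∣ y^2 - a := dvd_trans ⟨2^(m+2), by ring⟩ ⟨t, ht⟩
      obtain ⟨u, hu⟩ := h2
      rcases Int.even_or_odd y with ⟨w, hw⟩ | ⟨w, hw⟩
      · exfalso
        have hsq : y^2 = 4*(w*w) := by rw [hw]; ring
        omega
      · omega
    rcases Int.even_or_odd t with ⟨u, hu⟩ | ⟨u, hu⟩
    · refine ⟨y, u, ?_⟩
      rw [ht, hu, show m+1+3 = (m+3)+1 from rfl, pow_succ]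
      ring
    · obtain ⟨q, hq⟩ : ∃ q, t + y = 2 * q := ⟨(t+y)/2, by omega⟩
      refine ⟨y + 2^(m+2), q + 2^m, ?_⟩
      have e0 : (y + 2^(m+2))^2 - a = (y^2 - a) + 2^(m+3) * (t+y) - 2^(m+3)*t + 2^(m+2) * 2^(m+2) := by ring
      rw [e0, ht, hq]
      have e1 : (2:ℤ)^(m+2) * 2^(m+2) = 2^(m+1+3) * 2^m := by rw [← pow_add, ← pow_add]; ring_nf
      have e2 : (2:ℤ)^(m+3) * (2 * q) = 2^(m+1+3) * q := by
        rw [show m+1+3 = (m+3)+1 from rfl, pow_succ]; ring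
      rw [e1, e2]
      ring


lemma sq_eq_one_card (m : ℕ) :
    Nat.card {x : ZMod (2^(m+3)) // x ^ 2 = 1} = 4 := by
  set N : ℕ := 2^(m+3) with hN
  haveI : NeZero N := ⟨pow_ne_zero _ two_ne_zero⟩
  set P : ℕ := 2^(m+2) with hP
  have hNP : N = 2 * P := by rw [hN, hP, pow_succ]; ring
  have hP4 : 4 ≤ P := by
    calc (4:ℕ) = 2^2 := by norm_num
    _ ≤ 2^(m+2) := Nat.pow_le_pow_right (by norm_num) (by omega)
  set c : ZMod N := ((P : ℕ) : ZMod N) with hc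
  have hNzero : ((N : ℕ) : ZMod N) = 0 := ZMod.natCast_self N
  have h2c : 2 * c = 0 := by
    rw [hc, ← Nat.cast_ofNat, ← Nat.cast_mul, ← hNP, hNzero]
  have hcc : c * c = 0 := by
    have : P * P = N * 2^(m+1) := by rw [hNP, hP]; ring
    rw [hc, ← Nat.cast_mul, this, Nat.cast_mul, hNzero, zero_mul]
  have hcast_ne : ∀ t : ℕ, 0 < t → t < N → ((t : ℕ) : ZMod N) ≠ 0 := by
    intro t ht htN h
    have := (ZMod.natCast_eq_zero_iff t N).mp h
    have := Nat.le_of_dvd ht this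
    omega
  have hPN : P < N := by omega
  have h2ne : (2 : ZMod N) ≠ 0 := by
    have := hcast_ne 2 (by norm_num) (by omega)
    simpa using this
  have hc0 : c ≠ 0 := hcast_ne P (by omega) hPN
  have hcm2 : c - 2 ≠ 0 := by
    have h := hcast_ne (P - 2) (by omega) (by omega)
    have : ((P - 2 : ℕ) : ZMod N) = c - 2 := by
      rw [Nat.cast_sub (by omega)]; norm_num [hc]
    rwa [this] at h
  have hcp2 : c + 2 ≠ 0 := by
    have h := hcast_ne (P + 2) (by omega) (by omega)
    have : ((P + 2 : ℕ) : ZMod N) = c + 2 := by push_cast; ring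
    rwa [this] at h
  have hsq : ∀ x : ZMod N, x ^ 2 = 1 ↔ x ∈ ({1, -1, c-1, c+1} : Set (ZMod N)) := by
    intro x
    simp only [Set.mem_insert_iff, Set.mem_singleton_iff]
    constructor
    · intro hx
      have hxv : ((x.val : ℕ) : ZMod N) = x := ZMod.natCast_rightInverse x
      set v : ℕ := x.val with hv
      have hdvd : (N : ℤ) ∣ (v : ℤ)^2 - 1 := by
        apply (ZMod.intCast_zmod_eq_zero_iff_dvd _ N).mp
        push_cast [hxv]
        rw [hx]; ring
      have hNZ : (N : ℤ) = 2 * (P : ℤ) := by exact_mod_cast congrArg (Nat.cast : ℕ → ℤ) hNP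
      have hvodd : v % 2 = 1 := by
        obtain ⟨u, hu⟩ := hdvd
        rw [hNZ] at hu
        obtain ⟨q, hq⟩ : ∃ q : ℤ, (v:ℤ)^2 - 1 = 2*q := ⟨(P:ℤ)*u, by rw [hu]; ring⟩
        rcases Nat.even_or_odd v with ⟨w, hw⟩ | ⟨w, hw⟩
        · exfalso
          have : ((v:ℤ))^2 = 4*((w:ℤ)*w) := by rw [hw]; push_cast; ring
          omega
        · omega
      set w : ℕ := v / 2 with hw
      have hvw : v = 2 * w + 1 := by omega
      have hv1 : 1 ≤ v^2 := by
        have h1 : 1 ≤ v := by omega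
        calc (1:ℕ) = 1^2 := by norm_num
        _ ≤ v^2 := Nat.pow_le_pow_left h1 2
      have hdvdN : N ∣ v^2 - 1 := by
        have h := hdvd
        rw [show ((v:ℤ)^2 - 1) = ((v^2 - 1 : ℕ) : ℤ) by rw [Nat.cast_sub hv1]; push_cast; ring] at h
        exact_mod_cast h
      have hkey : 2^(m+1) ∣ w * (w+1) := by
        have hv2 : v^2 - 1 = 4 * (w * (w+1)) := by
          have : v^2 = 4*(w*(w+1)) + 1 := by rw [hvw]; ring
          omega
        rw [hv2] at hdvdN
        have hN4 : N = 4 * 2^(m+1) := by rw [hN]; ring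
        rw [hN4] at hdvdN
        exact (Nat.mul_dvd_mul_iff_left (by norm_num : 0 < 4)).mp hdvdN
      have hculemma : ∀ u : ℕ, ((2^(m+2) * u : ℕ) : ZMod N) = c * (u : ℕ) := by
        intro u; rw [Nat.cast_mul, hc]
      have hcu : ∀ u : ℕ, c * (u : ℕ) = 0 ∨ c * (u : ℕ) = c := by
        intro u
        rcases Nat.even_or_odd u with ⟨r, hr⟩ | ⟨r, hr⟩
        · left
          have : (u : ZMod N) = 2 * r := by rw [hr]; push_cast; ring
          rw [this, show c * (2 * (r:ZMod N)) = (2*c) * r by ring, h2c, zero_mul]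
        · right
          have : (u : ZMod N) = 2 * r + 1 := by rw [hr]; push_cast; ring
          rw [this, mul_add, show c * (2 * (r:ZMod N)) = (2*c) * r by ring, h2c, zero_mul,
            zero_add, mul_one]
      rcases Nat.even_or_odd w with ⟨r, hr⟩ | hwodd
      · have hcop : Nat.Coprime (2^(m+1)) (w+1) := by
          apply Nat.Coprime.pow_left
          rw [Nat.Prime.coprime_iff_not_dvd Nat.prime_two]
          rintro ⟨u, hu⟩; omega
        obtain ⟨u, hu⟩ := hcop.dvd_of_dvd_mul_right hkey
        have hveq : v = 2^(m+2) * u + 1 := by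
          have h2 : 2^(m+2)*u = 2 * (2^(m+1)*u) := by ring
          omega
        have hxc : x = c * (u : ℕ) + 1 := by
          rw [← hxv, hveq, Nat.cast_add, Nat.cast_one, hculemma]
        rcases hcu u with h | h <;> rw [h] at hxc
        · left; simpa using hxc
        · right; right; right; simpa using hxc
      · have hcop : Nat.Coprime (2^(m+1)) w := by
          apply Nat.Coprime.pow_left
          rw [Nat.Prime.coprime_iff_not_dvd Nat.prime_two]
          obtain ⟨r, hr⟩ := hwodd
          rintro ⟨u, hu⟩; omega
        obtain ⟨u, hu⟩ := hcop.dvd_of_dvd_mul_left hkey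
        have hveq : v + 1 = 2^(m+2) * u := by
          have h2 : 2^(m+2)*u = 2 * (2^(m+1)*u) := by ring
          omega
        have hx1 : x + 1 = c * (u : ℕ) := by
          have hcast : ((v + 1 : ℕ) : ZMod N) = x + 1 := by push_cast [hxv]; ring
          rw [← hcast, hveq, hculemma]
        rcases hcu u with h | h <;> rw [h] at hx1
        · right; left; linear_combination hx1
        · right; right; left; linear_combination hx1
    · intro hx
      rcases hx with h | h | h | h <;> subst h
      · ring
      · ring
      · linear_combination hcc - h2c
      · linear_combination hcc + h2c
  have hsetcard : Nat.card {x : ZMod N // x ^ 2 = 1} =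
      ({1, -1, c-1, c+1} : Set (ZMod N)).ncard := by
    rw [← Nat.card_coe_set_eq]
    exact Nat.card_congr (Equiv.subtypeEquivRight hsq)
  rw [hsetcard]
  have d1 : (1 : ZMod N) ≠ -1 := fun h => h2ne (by linear_combination h)
  have d2 : (1 : ZMod N) ≠ c - 1 := fun h => hcm2 (by linear_combination -h)
  have d3 : (1 : ZMod N) ≠ c + 1 := fun h => hc0 (by linear_combination -h)
  have d4 : (-1 : ZMod N) ≠ c - 1 := fun h => hc0 (by linear_combination -h)
  have d5 : (-1 : ZMod N) ≠ c + 1 := fun h => hcp2 (by linear_combination -h)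
  have d6 : (c - 1 : ZMod N) ≠ c + 1 := fun h => h2ne (by linear_combination -h)
  rw [Set.ncard_insert_of_notMem (by simp [d1, d2, d3]),
    Set.ncard_insert_of_notMem (by simp [d4, d5]),
    Set.ncard_pair d6]



lemma card_pow3_four (m : ℕ) (a : ℤ) (ha : a % 8 = 1) :
    Nat.card {x : ZMod (2^(m+3)) // x ^ 2 = (a : ZMod (2^(m+3)))} = 4 := by
  set N : ℕ := 2^(m+3) with hN
  haveI : NeZero N := ⟨pow_ne_zero _ two_ne_zero⟩
  obtain ⟨y, hy⟩ := sqrt_exists a ha m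
  have hyodd : y % 2 = 1 := by
    obtain ⟨t, ht⟩ := hy
    have h8 : (2:ℤ)^(m+3) = 2 * 2^(m+2) := by ring
    obtain ⟨q, hq⟩ : ∃ q : ℤ, y^2 - a = 2*q := ⟨2^(m+2)*t, by rw [ht, h8]; ring⟩
    rcases Int.even_or_odd y with ⟨w, hw⟩ | ⟨w, hw⟩
    · exfalso
      have : y^2 = 4*(w*w) := by rw [hw]; ring
      omega
    · omega
  set x0 : ZMod N := ((y : ℤ) : ZMod N) with hx0def
  have hx0 : x0 ^ 2 = (a : ZMod N) := by
    have h0 : ((y^2 - a : ℤ) : ZMod N) = 0 := by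
      rw [ZMod.intCast_zmod_eq_zero_iff_dvd]
      exact_mod_cast hy
    push_cast at h0
    rw [hx0def]
    linear_combination h0
  -- x0 is a unit
  have hunit : IsUnit x0 := by
    have hcop : Nat.Coprime y.natAbs N := by
      apply Nat.Coprime.pow_right
      rw [Nat.coprime_comm, Nat.Prime.coprime_iff_not_dvd Nat.prime_two]
      rintro ⟨u, hu⟩
      omega
    have hnat : IsUnit ((y.natAbs : ℕ) : ZMod N) := (ZMod.isUnit_iff_coprime _ _).mpr hcop
    rcases Int.natAbs_eq y with h | h
    · rw [hx0def, h, Int.cast_natCast]; exact hnat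
    · rw [hx0def, h, Int.cast_neg, Int.cast_natCast]; exact hnat.neg
  set u := hunit.unit with hu
  have hus : (↑u : ZMod N) = x0 := hunit.unit_spec
  have hiu : (↑u⁻¹ : ZMod N) * x0 = 1 := by rw [← hus]; exact u.inv_mul
  let e : {x : ZMod N // x ^ 2 = (a : ZMod N)} ≃ {x : ZMod N // x ^ 2 = 1} :=
    { toFun := fun z => ⟨(↑u⁻¹ : ZMod N) * z.1, by
        have h2 := z.2
        linear_combination (↑u⁻¹ : ZMod N)^2 * h2 - (↑u⁻¹ : ZMod N)^2 * hx0
          + ((↑u⁻¹ : ZMod N) * x0 + 1) * hiu⟩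
      invFun := fun z => ⟨x0 * z.1, by
        have h2 := z.2
        linear_combination z.1^2 * hx0 + (a : ZMod N) * h2⟩
      left_inv := fun z => Subtype.ext (by
        show x0 * ((↑u⁻¹ : ZMod N) * z.1) = z.1
        linear_combination z.1 * hiu)
      right_inv := fun z => Subtype.ext (by
        show (↑u⁻¹ : ZMod N) * (x0 * z.1) = z.1
        linear_combination z.1 * hiu) }
  rw [Nat.card_congr e, sq_eq_one_card]

lemma C_pow3_zero (m : ℕ) (a : ℤ) (ha : a % 8 ≠ 1) (h2 : a % 2 = 1) : C (2^(m+3)) a = 0 := by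
  haveI := sq_eq_isEmpty m a ha h2
  rw [C]
  exact Nat.card_of_isEmpty

lemma C_pow3_four (m : ℕ) (a : ℤ) (ha : a % 8 = 1) : C (2^(m+3)) a = 4 := by
  rw [C]
  exact card_pow3_four m a ha




theorem stmt_10 (n : ℕ) (hn : 0 < n) (hodd : Odd n) (s : ℝ) (hs : 0 < s) :
    (n % 8 = 1 → ∑' k : ℕ, (C (2 ^ k) (-(n : ℤ)) : ℝ) * (2 : ℝ) ^ (-(k : ℝ) * s) =
      1 + (2 : ℝ) ^ (-s)) ∧
    (n % 8 = 3 → ∑' k : ℕ, (C (2 ^ k) (-(n : ℤ)) : ℝ) * (2 : ℝ) ^ (-(k : ℝ) * s) =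
      1 + (2 : ℝ) ^ (-s) + 2 * (2 : ℝ) ^ (-(2 * s))) ∧
    (n % 8 = 5 → ∑' k : ℕ, (C (2 ^ k) (-(n : ℤ)) : ℝ) * (2 : ℝ) ^ (-(k : ℝ) * s) =
      1 + (2 : ℝ) ^ (-s)) ∧
    (n % 8 = 7 → ∑' k : ℕ, (C (2 ^ k) (-(n : ℤ)) : ℝ) * (2 : ℝ) ^ (-(k : ℝ) * s) =
      (1 + (2 : ℝ) ^ (-(2 * s)) + 2 * (2 : ℝ) ^ (-(3 * s))) / (1 - (2 : ℝ) ^ (-s))) := by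
  set a : ℤ := -(n : ℤ) with hadef
  set x : ℝ := (2 : ℝ) ^ (-s) with hxdef
  have hx0 : 0 < x := Real.rpow_pos_of_pos two_pos _
  have hx1 : x < 1 := Real.rpow_lt_one_of_one_lt_of_neg one_lt_two (by linarith)
  have hterm : ∀ k : ℕ, (2 : ℝ) ^ (-(k : ℝ) * s) = x ^ k := by
    intro k
    rw [hxdef, show -(k : ℝ) * s = (-s) * (k : ℝ) by ring,
      Real.rpow_mul (by norm_num : (0:ℝ) ≤ 2), Real.rpow_natCast]
  have hterm2 : (2 : ℝ) ^ (-(2 * s)) = x ^ 2 := by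
    rw [hxdef, show -(2 * s) = (-s) * ((2:ℕ) : ℝ) by push_cast; ring,
      Real.rpow_mul (by norm_num : (0:ℝ) ≤ 2), Real.rpow_natCast]
  have hterm3 : (2 : ℝ) ^ (-(3 * s)) = x ^ 3 := by
    rw [hxdef, show -(3 * s) = (-s) * ((3:ℕ) : ℝ) by push_cast; ring,
      Real.rpow_mul (by norm_num : (0:ℝ) ≤ 2), Real.rpow_natCast]
  have ha2 : a % 2 = 1 := by
    obtain ⟨t, ht⟩ := hodd
    omega
  set f : ℕ → ℝ := fun k => (C (2 ^ k) a : ℝ) * (2 : ℝ) ^ (-(k : ℝ) * s) with hfdef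
  have hf0 : f 0 = 1 := by simp [hfdef, pow_zero, C_one]
  have hf1 : f 1 = x := by
    simp only [hfdef, pow_one, C_two a ha2, hterm 1]
    norm_num
  -- case where C vanishes from k = 2 on  (a % 4 = 3)
  have vanish_case : a % 4 = 3 → ∑' k, f k = 1 + x := by
    intro ha4
    have hsupp : ∀ k ∉ Finset.range 2, f k = 0 := by
      intro k hk
      simp only [Finset.mem_range, not_lt] at hk
      rcases k with _ | _ | _ | m
      · omega
      · omega
      · simp [hfdef, C_four_three a ha4]
      · have : C (2 ^ (m+3)) a = 0 := C_pow3_zero m a (by omega) ha2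
        simp [hfdef, this]
    rw [tsum_eq_sum hsupp]
    rw [Finset.sum_range_succ, Finset.sum_range_one, hf0, hf1]
  constructor
  · -- n ≡ 1 [8]  →  a ≡ 7 [8], a ≡ 3 [4]
    intro h8
    have h8' : (n : ℤ) % 8 = 1 := by omega
    exact vanish_case (by omega)
  refine ⟨?_, ?_, ?_⟩
  · -- n ≡ 3 [8] → a ≡ 5 [8], a ≡ 1 [4] : C 4 = 2, rest 0
    intro h8
    have h8' : (n : ℤ) % 8 = 3 := by omega
    have hsupp : ∀ k ∉ Finset.range 3, f k = 0 := by
      intro k hk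
      simp only [Finset.mem_range, not_lt] at hk
      rcases k with _ | _ | _ | m
      · omega
      · omega
      · omega
      · have : C (2 ^ (m+3)) a = 0 := C_pow3_zero m a (by omega) ha2
        simp [hfdef, this]
    rw [tsum_eq_sum hsupp, Finset.sum_range_succ, Finset.sum_range_succ,
      Finset.sum_range_one, hf0, hf1]
    have hf2 : f 2 = 2 * x ^ 2 := by
      simp only [hfdef]
      rw [show (2:ℕ)^2 = 4 by norm_num, C_four_one a (by omega), hterm 2]
      norm_num
    rw [hf2, hterm2]
  · -- n ≡ 5 [8] → a ≡ 3 [8], a ≡ 3 [4]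
    intro h8
    have h8' : (n : ℤ) % 8 = 5 := by omega
    exact vanish_case (by omega)
  · -- n ≡ 7 [8] → a ≡ 1 [8]
    intro h8
    have h8' : (n : ℤ) % 8 = 7 := by omega
    have ha8 : a % 8 = 1 := by omega
    have hf2 : f 2 = 2 * x ^ 2 := by
      simp only [hfdef]
      rw [show (2:ℕ)^2 = 4 by norm_num, C_four_one a (by omega), hterm 2]
      norm_num
    have hshift : ∀ k : ℕ, f (k + 3) = (4 * x ^ 3) * x ^ k := by
      intro k
      simp only [hfdef]
      rw [C_pow3_four k a ha8, hterm (k + 3)]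
      push_cast
      ring
    have hsum : Summable f := by
      rw [← summable_nat_add_iff 3]
      apply Summable.congr ((summable_geometric_of_lt_one hx0.le hx1).mul_left (4 * x ^ 3))
      intro k
      exact (hshift k).symm
    rw [← Summable.sum_add_tsum_nat_add 3 hsum, tsum_congr hshift, tsum_mul_left,
      tsum_geometric_of_lt_one hx0.le hx1, Finset.sum_range_succ, Finset.sum_range_succ,
      Finset.sum_range_one, hf0, hf1, hf2, hterm2, hterm3]
    have h1x : 1 - x ≠ 0 := by linarith
    field_simp
    ring
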